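/- For the Dirichlet Lagrangian l(x,y,v) = ½|v|² on maps ℝ² → ℝ², with W(z,p) = e + Σ p^μ_i v^i_μ + r(v^1_1 v^2_2 − v^1_2 v^2_1) − ½|v|², the stationarity condition ∂W/∂z = 0 is solvable for v in terms of p exactly when r ≠ ±1, with solution v^i_μ = (p^μ_i + ε_{μν} ε^{ij} p^ν_j r)/(1 − r²); the resulting Hamiltonian on the open set {r ≠ ±1} is H(q,p) = e + (1/(1−r²)) ( |p|²/2 + r (p^1_1 p^2_2 − p^1_2 p^2_1) ). -/

import Mathlib

/-- `W(q,z,p) = ⟨z,p⟩ - L(q,z)` for the Dirichlet Lagrangian `l = ½|v|²` on maps `ℝ² → ℝ²`,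
as a function of the velocity coordinates. -/
noncomputable def Wdir (e p11 p12 p21 p22 r : ℝ) (v11 v12 v21 v22 : ℝ) : ℝ :=
  e + p11 * v11 + p21 * v12 + p12 * v21 + p22 * v22 + r * (v11 * v22 - v12 * v21)
    - (v11 ^ 2 + v12 ^ 2 + v21 ^ 2 + v22 ^ 2) / 2

/-- The stationarity condition `∂W/∂z = 0` for the Dirichlet Lagrangian. -/
def DirStat (e p11 p12 p21 p22 r v11 v12 v21 v22 : ℝ) : Prop :=
  HasDerivAt (fun t => Wdir e p11 p12 p21 p22 r t v12 v21 v22) 0 v11 ∧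
  HasDerivAt (fun t => Wdir e p11 p12 p21 p22 r v11 t v21 v22) 0 v12 ∧
  HasDerivAt (fun t => Wdir e p11 p12 p21 p22 r v11 v12 t v22) 0 v21 ∧
  HasDerivAt (fun t => Wdir e p11 p12 p21 p22 r v11 v12 v21 t) 0 v22

/-- for the elliptic Dirichlet integral on maps `ℝ² → ℝ²`, the stationarity
condition `∂W/∂z = 0` is solvable (uniquely) for `v` in terms of `p` exactly when `r ≠ ±1`,
with the stated solution `v^i_μ = (p^μ_i + ε_{μν}ε^{ij}p^ν_j r)/(1-r²)`; the resulting
Hamiltonian on `{r ≠ ±1}` is `H = e + (1/(1-r²))(|p|²/2 + r(p¹₁p²₂ - p¹₂p²₁))`. -/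

lemma aux_hd (A B x : ℝ) : HasDerivAt (fun t : ℝ => A + B * t - t ^ 2 / 2) (B - x) x := by
  have h1 : HasDerivAt (fun t : ℝ => B * t) B x := by
    simpa using (hasDerivAt_id x).const_mul B
  have h2 : HasDerivAt (fun t : ℝ => t ^ 2 / 2) x x := by
    simpa using (hasDerivAt_pow 2 x).div_const 2
  exact (h1.const_add A).sub h2

lemma aux_iff (A B x : ℝ) : HasDerivAt (fun t : ℝ => A + B * t - t ^ 2 / 2) 0 x ↔ x = B := by
  constructor
  · intro h
    have := h.unique (aux_hd A B x)
    linarith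
  · intro h
    have := aux_hd A B x
    rw [h] at this ⊢
    simpa using this

lemma dirstat_iff (e p11 p12 p21 p22 r v11 v12 v21 v22 : ℝ) :
    DirStat e p11 p12 p21 p22 r v11 v12 v21 v22 ↔
      (v11 = p11 + r * v22 ∧ v12 = p21 - r * v21 ∧ v21 = p12 - r * v12 ∧
        v22 = p22 + r * v11) := by
  have e1 : (fun t => Wdir e p11 p12 p21 p22 r t v12 v21 v22)
      = fun t : ℝ => (e + p21 * v12 + p12 * v21 + p22 * v22 - r * (v12 * v21)
          - (v12 ^ 2 + v21 ^ 2 + v22 ^ 2) / 2) + (p11 + r * v22) * t - t ^ 2 / 2 := by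
    funext t; simp only [Wdir]; ring
  have e2 : (fun t => Wdir e p11 p12 p21 p22 r v11 t v21 v22)
      = fun t : ℝ => (e + p11 * v11 + p12 * v21 + p22 * v22 + r * (v11 * v22)
          - (v11 ^ 2 + v21 ^ 2 + v22 ^ 2) / 2) + (p21 - r * v21) * t - t ^ 2 / 2 := by
    funext t; simp only [Wdir]; ring
  have e3 : (fun t => Wdir e p11 p12 p21 p22 r v11 v12 t v22)
      = fun t : ℝ => (e + p11 * v11 + p21 * v12 + p22 * v22 + r * (v11 * v22)
          - (v11 ^ 2 + v12 ^ 2 + v22 ^ 2) / 2) + (p12 - r * v12) * t - t ^ 2 / 2 := by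
    funext t; simp only [Wdir]; ring
  have e4 : (fun t => Wdir e p11 p12 p21 p22 r v11 v12 v21 t)
      = fun t : ℝ => (e + p11 * v11 + p21 * v12 + p12 * v21 - r * (v12 * v21)
          - (v11 ^ 2 + v12 ^ 2 + v21 ^ 2) / 2) + (p22 + r * v11) * t - t ^ 2 / 2 := by
    funext t; simp only [Wdir]; ring
  unfold DirStat
  rw [e1, e2, e3, e4, aux_iff, aux_iff, aux_iff, aux_iff]

lemma solve_lin (r p11 p12 p21 p22 v11 v12 v21 v22 : ℝ) (hr : 1 - r ^ 2 ≠ 0)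
    (h1 : v11 = p11 + r * v22) (h2 : v12 = p21 - r * v21)
    (h3 : v21 = p12 - r * v12) (h4 : v22 = p22 + r * v11) :
    v11 = (p11 + r * p22) / (1 - r ^ 2) ∧ v12 = (p21 - r * p12) / (1 - r ^ 2) ∧
      v21 = (p12 - r * p21) / (1 - r ^ 2) ∧ v22 = (p22 + r * p11) / (1 - r ^ 2) := by
  refine ⟨?_, ?_, ?_, ?_⟩ <;> field_simp
  · linear_combination h1 + r * h4
  · linear_combination h2 - r * h3
  · linear_combination h3 - r * h2
  · linear_combination h4 + r * h1
theorem stmt13 (e r : ℝ) :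
    ((r ≠ 1 ∧ r ≠ -1) ↔
      ∀ p11 p12 p21 p22 : ℝ, ∃! v : ℝ × ℝ × ℝ × ℝ,
        DirStat e p11 p12 p21 p22 r v.1 v.2.1 v.2.2.1 v.2.2.2)
    ∧ ((r ≠ 1 ∧ r ≠ -1) →
        ∀ p11 p12 p21 p22 v11 v12 v21 v22 : ℝ,
          DirStat e p11 p12 p21 p22 r v11 v12 v21 v22 →
          (v11 = (p11 + r * p22) / (1 - r ^ 2) ∧
           v12 = (p21 - r * p12) / (1 - r ^ 2) ∧
           v21 = (p12 - r * p21) / (1 - r ^ 2) ∧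
           v22 = (p22 + r * p11) / (1 - r ^ 2)) ∧
          Wdir e p11 p12 p21 p22 r v11 v12 v21 v22
            = e + (1 / (1 - r ^ 2)) *
                ((p11 ^ 2 + p12 ^ 2 + p21 ^ 2 + p22 ^ 2) / 2
                  + r * (p11 * p22 - p12 * p21))) := by
  constructor
  · constructor
    · rintro ⟨hr1, hr2⟩ p11 p12 p21 p22
      have hr : 1 - r ^ 2 ≠ 0 := by
        intro h0
        rcases mul_eq_zero.mp (show (1 - r) * (1 + r) = 0 by nlinarith) with h | h
        · exact hr1 (by linarith)
        · exact hr2 (by linarith)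
      refine ⟨((p11 + r * p22) / (1 - r ^ 2), (p21 - r * p12) / (1 - r ^ 2),
        (p12 - r * p21) / (1 - r ^ 2), (p22 + r * p11) / (1 - r ^ 2)), ?_, ?_⟩
      · dsimp only
        rw [dirstat_iff]
        refine ⟨?_, ?_, ?_, ?_⟩ <;> field_simp <;> ring
      · rintro ⟨v11, v12, v21, v22⟩ hv
        rw [dirstat_iff] at hv
        obtain ⟨h1, h2, h3, h4⟩ := hv
        obtain ⟨e1, e2, e3, e4⟩ := solve_lin r p11 p12 p21 p22 v11 v12 v21 v22 hr h1 h2 h3 h4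
        simp only [Prod.mk.injEq]
        exact ⟨e1, e2, e3, e4⟩
    · intro h
      obtain ⟨⟨v11, v12, v21, v22⟩, hv, -⟩ := h 1 0 0 0
      rw [dirstat_iff] at hv
      obtain ⟨h1, -, -, h4⟩ := hv
      constructor <;> rintro rfl <;> simp_all
  · rintro ⟨hr1, hr2⟩ p11 p12 p21 p22 v11 v12 v21 v22 hv
    have hr : 1 - r ^ 2 ≠ 0 := by
      intro h0
      rcases mul_eq_zero.mp (show (1 - r) * (1 + r) = 0 by nlinarith) with h | h
      · exact hr1 (by linarith)
      · exact hr2 (by linarith)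
    rw [dirstat_iff] at hv
    obtain ⟨h1, h2, h3, h4⟩ := hv
    obtain ⟨e1, e2, e3, e4⟩ := solve_lin r p11 p12 p21 p22 v11 v12 v21 v22 hr h1 h2 h3 h4
    refine ⟨⟨e1, e2, e3, e4⟩, ?_⟩
    subst e1 e2 e3 e4
    simp only [Wdir]
    field_simp
    ring
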